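/- arXiv:1805.06963 — 4 statements merged into one kernel-verified Lean document; each statement's English description precedes it below -/
import Mathlib

section
/- Let V, Ṽ satisfy the MM assumptions: X closed convex, V continuous and directionally differentiable, Ṽ(·|·) continuous on X × X, y ∈ argmin_{x∈X} {Ṽ(x|y) - V(x)} for all y ∈ X, and Ṽ'(x; d|x) = V'(x; d) for all feasible directions d at x ∈ X. Then every limit point x* of the MM sequence x^{k+1} ∈ argmin_{x∈X} Ṽ(x|x^k) is a d-stationary point of min_{x∈X} V(x), i.e., V'(x*; y - x*) ≥ 0 for all y ∈ X. -/
open Filter Topology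

set_option maxHeartbeats 1000000 in
/-- Convergence of the MM algorithm: under the MM assumptions, every limit point `x*` of the
MM sequence is a d-stationary point of `min_{x ∈ X} V(x)`, i.e. `V'(x*; y - x*) ≥ 0` for all
`y ∈ X`. -/
theorem mm_limit_points_are_d_stationary
    (m : ℕ) (X : Set (EuclideanSpace ℝ (Fin m)))
    (V : EuclideanSpace ℝ (Fin m) → ℝ)
    (Vt : EuclideanSpace ℝ (Fin m) → EuclideanSpace ℝ (Fin m) → ℝ)  -- Vt x y = Ṽ(x | y)
    (DV : EuclideanSpace ℝ (Fin m) → EuclideanSpace ℝ (Fin m) → ℝ)  -- DV x d = V'(x; d)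
    (hXne : X.Nonempty) (hXclosed : IsClosed X) (hXconvex : Convex ℝ X)
    (hVcont : Continuous V)
    (hVbdd : BddBelow (V '' X))
    -- V is directionally differentiable on X along feasible directions, with derivative DV:
    (hDV : ∀ x ∈ X, ∀ d : EuclideanSpace ℝ (Fin m), (∃ t > (0 : ℝ), x + t • d ∈ X) →
      Tendsto (fun t : ℝ => (V (x + t • d) - V x) / t) (𝓝[>] (0 : ℝ)) (𝓝 (DV x d)))
    -- the surrogate is jointly continuous:
    (hVtcont : Continuous fun p : EuclideanSpace ℝ (Fin m) × EuclideanSpace ℝ (Fin m) =>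
      Vt p.1 p.2)
    -- upperbound property: for each y ∈ X, y minimizes x ↦ Ṽ(x|y) - V(x) over X:
    (hupper : ∀ y ∈ X, ∀ x ∈ X, Vt y y - V y ≤ Vt x y - V x)
    -- derivative consistency: Ṽ'(x; d | x) = V'(x; d):
    (hconsistent : ∀ x ∈ X, ∀ d : EuclideanSpace ℝ (Fin m), (∃ t > (0 : ℝ), x + t • d ∈ X) →
      Tendsto (fun t : ℝ => (Vt (x + t • d) x - Vt x x) / t) (𝓝[>] (0 : ℝ)) (𝓝 (DV x d)))
    -- the MM sequence:
    (x : ℕ → EuclideanSpace ℝ (Fin m))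
    (hxX : ∀ k, x k ∈ X)
    (hargmin : ∀ k, ∀ z ∈ X, Vt (x (k + 1)) (x k) ≤ Vt z (x k))
    -- x* is a limit point of the sequence:
    (xstar : EuclideanSpace ℝ (Fin m))
    (hlim : ∃ σ : ℕ → ℕ, StrictMono σ ∧ Tendsto (fun t => x (σ t)) atTop (𝓝 xstar)) :
    ∀ y ∈ X, 0 ≤ DV xstar (y - xstar) := by
  obtain ⟨σ, hσmono, hσtend⟩ := hlim
  have hxstarX : xstar ∈ X :=
    hXclosed.mem_of_tendsto hσtend (Eventually.of_forall fun t => hxX _)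
  -- V along the sequence is antitone
  have Vdec : ∀ k, V (x (k + 1)) ≤ V (x k) := by
    intro k
    have h1 := hupper (x k) (hxX k) (x (k + 1)) (hxX (k + 1))
    have h2 := hargmin k (x k) (hxX k)
    linarith
  have anti : Antitone fun k => V (x k) := antitone_nat_of_succ_le Vdec
  have bdd : BddBelow (Set.range fun k => V (x k)) := by
    obtain ⟨b, hb⟩ := hVbdd
    exact ⟨b, by rintro _ ⟨k, rfl⟩; exact hb ⟨x k, hxX k, rfl⟩⟩
  set Vinf := ⨅ k, V (x k) with hVinfdef
  have hVinf : Tendsto (fun k => V (x k)) atTop (𝓝 Vinf) :=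
    tendsto_atTop_ciInf anti bdd
  have hσatTop : Tendsto σ atTop atTop := hσmono.tendsto_atTop
  have hVsub : Tendsto (fun t => V (x (σ t))) atTop (𝓝 Vinf) := hVinf.comp hσatTop
  have hVstar : Tendsto (fun t => V (x (σ t))) atTop (𝓝 (V xstar)) :=
    (hVcont.tendsto xstar).comp hσtend
  have Veq : Vinf = V xstar := tendsto_nhds_unique hVsub hVstar
  have hσ1atTop : Tendsto (fun t => σ t + 1) atTop atTop :=
    (tendsto_add_atTop_nat 1).comp hσatTop
  have hVsucc : Tendsto (fun t => V (x (σ t + 1))) atTop (𝓝 Vinf) := hVinf.comp hσ1atTop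
  -- diagonal continuity of Vt
  have hgdiag : Continuous fun w : EuclideanSpace ℝ (Fin m) => Vt w w :=
    hVtcont.comp (continuous_id.prodMk continuous_id)
  have hVtdiag : Tendsto (fun t => Vt (x (σ t)) (x (σ t))) atTop (𝓝 (Vt xstar xstar)) :=
    (hgdiag.tendsto xstar).comp hσtend
  intro y hy
  by_contra hcon
  push_neg at hcon
  set d := y - xstar with hd
  have hfeas : ∃ t > (0 : ℝ), xstar + t • d ∈ X := by
    refine ⟨1, one_pos, ?_⟩
    rw [one_smul, hd]
    simpa using hy
  have htend := hconsistent xstar hxstarX d hfeas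
  have hev : ∀ᶠ t in 𝓝[>] (0 : ℝ), (Vt (xstar + t • d) xstar - Vt xstar xstar) / t < 0 :=
    htend.eventually_lt_const hcon
  have hIoc : Set.Ioc (0 : ℝ) 1 ∈ 𝓝[>] (0 : ℝ) :=
    Ioc_mem_nhdsGT_of_mem ⟨le_refl 0, one_pos⟩
  obtain ⟨t0, hq, ht0⟩ := (hev.and (eventually_of_mem hIoc fun _ h => h)).exists
  have ht0pos : (0 : ℝ) < t0 := ht0.1
  set z := xstar + t0 • d with hzdef
  have hzlt : Vt z xstar < Vt xstar xstar := by
    have hnum : Vt z xstar - Vt xstar xstar < 0 := by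
      rcases div_neg_iff.mp hq with ⟨_, ht⟩ | ⟨hn, _⟩
      · linarith
      · exact hn
    linarith
  have hzX : z ∈ X := by
    have hcomb := hXconvex hxstarX hy (by linarith [ht0.2] : (0:ℝ) ≤ 1 - t0)
      (le_of_lt ht0pos) (by ring)
    have : z = (1 - t0) • xstar + t0 • y := by
      rw [hzdef, hd, smul_sub, sub_smul, one_smul]
      abel
    rw [this]; exact hcomb
  -- sandwich
  have hzc : Continuous fun w : EuclideanSpace ℝ (Fin m) => Vt z w :=
    hVtcont.comp (continuous_const.prodMk continuous_id)
  have hupperTend : Tendsto (fun t => Vt z (x (σ t))) atTop (𝓝 (Vt z xstar)) :=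
    (hzc.tendsto xstar).comp hσtend
  have hlowerTend :
      Tendsto (fun t => V (x (σ t + 1)) + Vt (x (σ t)) (x (σ t)) - V (x (σ t))) atTop
        (𝓝 (Vinf + Vt xstar xstar - V xstar)) :=
    (hVsucc.add hVtdiag).sub hVstar
  have hfinal : Vinf + Vt xstar xstar - V xstar ≤ Vt z xstar := by
    refine le_of_tendsto_of_tendsto' hlowerTend hupperTend fun t => ?_
    have h1 := hupper (x (σ t)) (hxX (σ t)) (x (σ t + 1)) (hxX (σ t + 1))
    have h2 := hargmin (σ t) z hzX
    linarith
  rw [Veq] at hfinal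
  linarith
end

section
/- Let {Y^k}, {W^k}, {Z^k} be real sequences with W^k ≥ 0 for all k, satisfying Y^{k+1} ≤ Y^k - W^k + Z^k for all k ≥ 0, and suppose the series Σ_{k=0}^∞ Z^k converges. Then either Y^k → -∞, or Y^k converges to a finite value and Σ_{k=0}^∞ W^k < ∞. -/
open Filter Topology

/-- Deterministic Robbins–Siegmund-type lemma: if `Y^{k+1} ≤ Y^k - W^k + Z^k` with `W^k ≥ 0`
and the series `∑ Z^k` converges, then either `Y^k → -∞`, or `Y^k` converges to a finite value
and `∑ W^k < ∞`. -/
theorem robbins_siegmund_deterministic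
    (Y W Z : ℕ → ℝ)
    (hW : ∀ k, 0 ≤ W k)
    (hrec : ∀ k, Y (k + 1) ≤ Y k - W k + Z k)
    (hZ : ∃ S : ℝ, Tendsto (fun n => ∑ k ∈ Finset.range n, Z k) atTop (𝓝 S)) :
    Tendsto Y atTop atBot ∨
      ((∃ l : ℝ, Tendsto Y atTop (𝓝 l)) ∧
        ∃ SW : ℝ, Tendsto (fun n => ∑ k ∈ Finset.range n, W k) atTop (𝓝 SW)) := by
  obtain ⟨S, hS⟩ := hZ
  set U : ℕ → ℝ := fun n => Y n - ∑ k ∈ Finset.range n, Z k with hUdef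
  have hstep : ∀ n, U (n + 1) + W n ≤ U n := by
    intro n
    have := hrec n
    simp only [hUdef, Finset.sum_range_succ]
    linarith
  have hanti : Antitone U := antitone_nat_of_succ_le fun n => by
    have := hstep n; have := hW n; linarith
  have hYeq : ∀ n, Y n = U n + ∑ k ∈ Finset.range n, Z k := by
    intro n; simp [hUdef]
  by_cases hbd : BddBelow (Set.range U)
  · right
    have hUlim : Tendsto U atTop (𝓝 (⨅ i, U i)) := tendsto_atTop_ciInf hanti hbd
    constructor
    · refine ⟨(⨅ i, U i) + S, ?_⟩
      have := hUlim.add hS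
      simpa [← hYeq] using this
    · -- partial sums of W are monotone and bounded above
      obtain ⟨B, hB⟩ := hbd
      have hsumW : ∀ n, ∑ k ∈ Finset.range n, W k ≤ U 0 - U n := by
        intro n
        induction n with
        | zero => simp
        | succ n ih =>
          rw [Finset.sum_range_succ]
          have := hstep n
          linarith
      have hmono : Monotone fun n => ∑ k ∈ Finset.range n, W k :=
        monotone_nat_of_le_succ fun n => by
          rw [Finset.sum_range_succ]; have := hW n; linarith
      have hbdd : BddAbove (Set.range fun n => ∑ k ∈ Finset.range n, W k) := by
        refine ⟨U 0 - B, ?_⟩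
        rintro x ⟨n, rfl⟩
        have hBn : B ≤ U n := hB ⟨n, rfl⟩
        have := hsumW n
        simp only
        linarith
      exact ⟨_, tendsto_atTop_ciSup hmono hbdd⟩
  · left
    have hmono : Monotone fun n => -U n := fun a b hab => by
      have := hanti hab; simpa using this
    have hnb : ¬ BddAbove (Set.range fun n => -U n) := by
      intro ⟨B, hB⟩
      refine hbd ⟨-B, ?_⟩
      rintro x ⟨n, rfl⟩
      have := hB ⟨n, rfl⟩
      simp only at this
      linarith
    have hU : Tendsto U atTop atBot := by
      have := tendsto_atTop_atTop_of_monotone' hmono hnb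
      have h2 : Tendsto (fun n => -(-U n)) atTop atBot := tendsto_neg_atTop_atBot.comp this
      simpa using h2
    have : Tendsto (fun n => U n + ∑ k ∈ Finset.range n, Z k) atTop atBot :=
      hU.atBot_add hS
    simpa [← hYeq] using this
end

section
/- Let 0 < λ < 1 and let {β^k} and {ν^k} be positive scalar sequences with Σ_k (β^k)² < ∞ and Σ_k (ν^k)² < ∞. Then Σ_{t=1}^∞ Σ_{l=1}^t λ^{t-l} β^t ν^l < ∞. -/
open Filter Topology

/-- If `0 < λ < 1` and `{β^k}`, `{ν^k}` are positive square-summable sequences, then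
`∑_{t=1}^∞ ∑_{l=1}^t λ^{t-l} β^t ν^l < ∞` (the partial sums converge). -/
theorem geometric_double_sum_summable
    (lam : ℝ) (hlam0 : 0 < lam) (hlam1 : lam < 1)
    (β ν : ℕ → ℝ) (hβpos : ∀ k, 0 < β k) (hνpos : ∀ k, 0 < ν k)
    (hβ : Summable fun k => (β k) ^ 2) (hν : Summable fun k => (ν k) ^ 2) :
    ∃ S : ℝ, Tendsto
      (fun T => ∑ t ∈ Finset.Icc 1 T, ∑ l ∈ Finset.Icc 1 t, lam ^ (t - l) * (β t * ν l))
      atTop (𝓝 S) := by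
  have h1 : 0 < 1 - lam := by linarith
  set c : ℝ := 1 / (1 - lam) with hc
  have hc0 : 0 ≤ c := by positivity
  have hgeom : ∀ (s : Finset ℕ) (g : ℕ → ℕ), Set.InjOn g s →
      ∑ x ∈ s, lam ^ (g x) ≤ c := by
    intro s g hg
    have h2 : ∑ x ∈ s, lam ^ (g x) = ∑ n ∈ s.image g, lam ^ n :=
      (Finset.sum_image (fun a ha b hb h => hg ha hb h)).symm
    rw [h2]
    calc ∑ n ∈ s.image g, lam ^ n
        ≤ ∑' n : ℕ, lam ^ n := Summable.sum_le_tsum _ (fun n _ => pow_nonneg hlam0.le n)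
          (summable_geometric_of_lt_one hlam0.le hlam1)
      _ = c := by rw [tsum_geometric_of_lt_one hlam0.le hlam1, hc, one_div]
  set Sβ := ∑' k, (β k) ^ 2 with hSβ
  set Sν := ∑' k, (ν k) ^ 2 with hSν
  set F : ℕ → ℝ := fun T =>
    ∑ t ∈ Finset.Icc 1 T, ∑ l ∈ Finset.Icc 1 t, lam ^ (t - l) * (β t * ν l) with hF
  have hterm : ∀ t l : ℕ, 0 ≤ lam ^ (t - l) * (β t * ν l) := fun t l => by
    have := (hβpos t).le; have := (hνpos l).le; positivity
  have hmono : Monotone F := by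
    intro a b hab
    apply Finset.sum_le_sum_of_subset_of_nonneg (Finset.Icc_subset_Icc_right hab)
    intro t _ _
    exact Finset.sum_nonneg fun l _ => hterm t l
  have hbound : ∀ T, F T ≤ (Sβ * c + Sν * c) / 2 := by
    intro T
    have hA : ∑ t ∈ Finset.Icc 1 T, ∑ l ∈ Finset.Icc 1 t,
        lam ^ (t - l) * (β t) ^ 2 / 2 ≤ Sβ * c / 2 := by
      have h3 : ∀ t ∈ Finset.Icc 1 T, ∑ l ∈ Finset.Icc 1 t,
          lam ^ (t - l) * (β t) ^ 2 / 2 ≤ (β t) ^ 2 / 2 * c := by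
        intro t _
        have : ∑ l ∈ Finset.Icc 1 t, lam ^ (t - l) * (β t) ^ 2 / 2
            = (β t) ^ 2 / 2 * ∑ l ∈ Finset.Icc 1 t, lam ^ (t - l) := by
          rw [Finset.mul_sum]; apply Finset.sum_congr rfl; intro l _; ring
        rw [this]
        exact mul_le_mul_of_nonneg_left
          (hgeom _ (fun l => t - l) (fun a ha b hb h => by
            simp only [Finset.coe_Icc, Set.mem_Icc] at ha hb
            have h' : t - a = t - b := h; omega))
          (by positivity)
      calc ∑ t ∈ Finset.Icc 1 T, ∑ l ∈ Finset.Icc 1 t, lam ^ (t - l) * (β t) ^ 2 / 2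
          ≤ ∑ t ∈ Finset.Icc 1 T, (β t) ^ 2 / 2 * c := Finset.sum_le_sum h3
        _ = c / 2 * ∑ t ∈ Finset.Icc 1 T, (β t) ^ 2 := by
            rw [Finset.mul_sum]; apply Finset.sum_congr rfl; intro t _; ring
        _ ≤ c / 2 * Sβ := by
            apply mul_le_mul_of_nonneg_left _ (by positivity)
            exact Summable.sum_le_tsum _ (fun k _ => sq_nonneg _) hβ
        _ = Sβ * c / 2 := by ring
    have hB : ∑ t ∈ Finset.Icc 1 T, ∑ l ∈ Finset.Icc 1 t,
        lam ^ (t - l) * (ν l) ^ 2 / 2 ≤ Sν * c / 2 := by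
      have hswap : ∑ t ∈ Finset.Icc 1 T, ∑ l ∈ Finset.Icc 1 t,
          lam ^ (t - l) * (ν l) ^ 2 / 2
          = ∑ l ∈ Finset.Icc 1 T, ∑ t ∈ Finset.Icc l T,
          lam ^ (t - l) * (ν l) ^ 2 / 2 :=
        Finset.sum_comm' (by intro t l; simp only [Finset.mem_Icc]; omega)
      rw [hswap]
      have h3 : ∀ l ∈ Finset.Icc 1 T, ∑ t ∈ Finset.Icc l T,
          lam ^ (t - l) * (ν l) ^ 2 / 2 ≤ (ν l) ^ 2 / 2 * c := by
        intro l _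
        have : ∑ t ∈ Finset.Icc l T, lam ^ (t - l) * (ν l) ^ 2 / 2
            = (ν l) ^ 2 / 2 * ∑ t ∈ Finset.Icc l T, lam ^ (t - l) := by
          rw [Finset.mul_sum]; apply Finset.sum_congr rfl; intro t _; ring
        rw [this]
        exact mul_le_mul_of_nonneg_left
          (hgeom _ (fun t => t - l) (fun a ha b hb h => by
            simp only [Finset.coe_Icc, Set.mem_Icc] at ha hb
            have h' : a - l = b - l := h; omega))
          (by positivity)
      calc ∑ l ∈ Finset.Icc 1 T, ∑ t ∈ Finset.Icc l T, lam ^ (t - l) * (ν l) ^ 2 / 2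
          ≤ ∑ l ∈ Finset.Icc 1 T, (ν l) ^ 2 / 2 * c := Finset.sum_le_sum h3
        _ = c / 2 * ∑ l ∈ Finset.Icc 1 T, (ν l) ^ 2 := by
            rw [Finset.mul_sum]; apply Finset.sum_congr rfl; intro l _; ring
        _ ≤ c / 2 * Sν := by
            apply mul_le_mul_of_nonneg_left _ (by positivity)
            exact Summable.sum_le_tsum _ (fun k _ => sq_nonneg _) hν
        _ = Sν * c / 2 := by ring
    have hstep : F T ≤ ∑ t ∈ Finset.Icc 1 T, ∑ l ∈ Finset.Icc 1 t,
        (lam ^ (t - l) * (β t) ^ 2 / 2 + lam ^ (t - l) * (ν l) ^ 2 / 2) := by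
      apply Finset.sum_le_sum; intro t _
      apply Finset.sum_le_sum; intro l _
      have hp : (0:ℝ) ≤ lam ^ (t - l) := pow_nonneg hlam0.le _
      nlinarith [sq_nonneg (β t - ν l), hp, mul_nonneg hp (sq_nonneg (β t - ν l))]
    have hsplit : ∑ t ∈ Finset.Icc 1 T, ∑ l ∈ Finset.Icc 1 t,
        (lam ^ (t - l) * (β t) ^ 2 / 2 + lam ^ (t - l) * (ν l) ^ 2 / 2)
        = (∑ t ∈ Finset.Icc 1 T, ∑ l ∈ Finset.Icc 1 t, lam ^ (t - l) * (β t) ^ 2 / 2)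
        + ∑ t ∈ Finset.Icc 1 T, ∑ l ∈ Finset.Icc 1 t, lam ^ (t - l) * (ν l) ^ 2 / 2 := by
      rw [← Finset.sum_add_distrib]
      apply Finset.sum_congr rfl; intro t _
      rw [← Finset.sum_add_distrib]
    linarith [hstep, hsplit ▸ hstep]
  refine ⟨⨆ T, F T, tendsto_atTop_ciSup hmono ⟨(Sβ * c + Sν * c) / 2, ?_⟩⟩
  rintro x ⟨T, rfl⟩
  exact hbound T
end

section
/- Let F : ℝ^m → ℝ be C¹ with ∇F L-Lipschitz, let G be convex, and let X be closed convex. For x ∈ X, let x̂(x) be the unique minimizer over X of F̃(z|x) + G(z), where F̃(·|x) is τ-strongly convex, differentiable, and satisfies ∇F̃(x|x) = ∇F(x). Then x is a fixed point of x̂ (i.e., x̂(x) = x) if and only if x is a d-stationary point of min_{z∈X} F(z) + G(z), i.e., ∇F(x)ᵀ(y - x) + G'(x; y - x) ≥ 0 for all y ∈ X. -/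
open Filter Topology

private lemma dirDeriv_of_hasGradientAt
    {E : Type*} [NormedAddCommGroup E] [InnerProductSpace ℝ E] [CompleteSpace E]
    (f : E → ℝ) (g x d : E) (hf : HasGradientAt f g x) :
    Tendsto (fun t : ℝ => (f (x + t • d) - f x) / t) (𝓝[>] (0 : ℝ))
      (𝓝 (inner ℝ g d : ℝ)) := by
  have hline : HasDerivAt (fun t : ℝ => x + t • d) d 0 := by
    simpa using ((hasDerivAt_id (0 : ℝ)).smul_const d).const_add x
  have h1 : HasDerivAt (fun t : ℝ => f (x + t • d)) (inner ℝ g d : ℝ) 0 := by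
    have hf' : HasFDerivAt f ((InnerProductSpace.toDual ℝ E) g) (x + (0:ℝ) • d) := by
      simpa using hf.hasFDerivAt
    have := hf'.comp_hasDerivAt 0 hline
    exact this
  have h3 : Tendsto (slope (fun t : ℝ => f (x + t • d)) 0) (𝓝[>] (0 : ℝ))
      (𝓝 (inner ℝ g d : ℝ)) :=
    (hasDerivAt_iff_tendsto_slope.1 h1).mono_left
      (nhdsWithin_mono _ (fun t ht => ne_of_gt ht))
  refine h3.congr' ?_
  filter_upwards [self_mem_nhdsWithin] with t ht
  rw [slope_def_field]
  simp [div_eq_inv_mul]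

private lemma limit_quot_le_of_convexOn
    {E : Type*} [NormedAddCommGroup E] [NormedSpace ℝ E]
    {s : Set E} (f : E → ℝ) (hf : ConvexOn ℝ s f) (x z : E)
    (hx : x ∈ s) (hz : z ∈ s) (l : ℝ)
    (htend : Tendsto (fun t : ℝ => (f (x + t • (z - x)) - f x) / t)
      (𝓝[>] (0 : ℝ)) (𝓝 l)) :
    l ≤ f z - f x := by
  refine le_of_tendsto htend ?_
  filter_upwards [Ioo_mem_nhdsGT_of_mem (Set.left_mem_Ico.2 one_pos)] with t ht
  have ht0 : (0 : ℝ) < t := ht.1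
  have hmem : x + t • (z - x) = (1 - t) • x + t • z := by
    simp [smul_sub, sub_smul]; abel
  have hcv := hf.2 hx hz (show (0:ℝ) ≤ 1 - t by linarith [ht.2]) ht0.le (by ring)
  simp only [smul_eq_mul] at hcv
  rw [hmem, div_le_iff₀ ht0]
  calc f ((1 - t) • x + t • z) - f x ≤ (1 - t) * f x + t * f z - f x := by linarith
    _ = (f z - f x) * t := by ring

/-- Fixed points of the SCA best-response map coincide with d-stationary points: with `F` C¹
(`L`-Lipschitz gradient), `G` convex, `X` closed convex, `x ∈ X`, and a `τ`-strongly convex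
differentiable surrogate `F̃(·|x)` satisfying `∇F̃(x|x) = ∇F(x)`, the unique minimizer `x̂(x)`
of `F̃(·|x) + G` over `X` equals `x` if and only if `x` is d-stationary for `F + G` on `X`,
i.e. `∇F(x)ᵀ(y - x) + G'(x; y - x) ≥ 0` for all `y ∈ X`. -/
theorem sca_fixed_point_iff_d_stationary
    (m : ℕ) (L τ : ℝ) (hL : 0 < L) (hτ : 0 < τ)
    (F G Ft : EuclideanSpace ℝ (Fin m) → ℝ)
    (gF gFt : EuclideanSpace ℝ (Fin m) → EuclideanSpace ℝ (Fin m))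
    (hF : ∀ z, HasGradientAt F (gF z) z)
    (hLip : LipschitzWith (Real.toNNReal L) gF)
    (hG : ConvexOn ℝ Set.univ G)
    -- directional derivative of the convex function G:
    (dG : EuclideanSpace ℝ (Fin m) → EuclideanSpace ℝ (Fin m) → ℝ)
    (hdG : ∀ z d, Tendsto (fun t : ℝ => (G (z + t • d) - G z) / t)
      (𝓝[>] (0 : ℝ)) (𝓝 (dG z d)))
    (X : Set (EuclideanSpace ℝ (Fin m))) (hXclosed : IsClosed X) (hXconvex : Convex ℝ X)
    (x : EuclideanSpace ℝ (Fin m)) (hx : x ∈ X)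
    -- Ft = F̃(·|x) is τ-strongly convex, differentiable, and gradient-consistent with F at x:
    (hFt_strong : StrongConvexOn X τ Ft)
    (hFt_diff : ∀ z, HasGradientAt Ft (gFt z) z)
    (hFt_consistent : gFt x = gF x)
    -- x̂ = x̂(x) is the (unique) minimizer of F̃(·|x) + G over X:
    (xhat : EuclideanSpace ℝ (Fin m)) (hxhatX : xhat ∈ X)
    (hxhat_min : ∀ z ∈ X, Ft xhat + G xhat ≤ Ft z + G z)
    (hxhat_uniq : ∀ z ∈ X, (∀ w ∈ X, Ft z + G z ≤ Ft w + G w) → z = xhat) :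
    xhat = x ↔ ∀ y ∈ X, 0 ≤ inner ℝ (gF x) (y - x) + dG x (y - x) := by
  have hFtconv : ConvexOn ℝ X Ft := (hFt_strong.strictConvexOn hτ).convexOn
  constructor
  · rintro rfl y hy
    set d := y - xhat with hd
    have hFtd := dirDeriv_of_hasGradientAt Ft (gFt xhat) xhat d (hFt_diff xhat)
    have hGd := hdG xhat d
    have hsum : Tendsto (fun t : ℝ =>
        (Ft (xhat + t • d) - Ft xhat) / t + (G (xhat + t • d) - G xhat) / t)
        (𝓝[>] (0 : ℝ)) (𝓝 ((inner ℝ (gFt xhat) d : ℝ) + dG xhat d)) := hFtd.add hGd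
    have hge : 0 ≤ (inner ℝ (gFt xhat) d : ℝ) + dG xhat d := by
      refine ge_of_tendsto hsum ?_
      filter_upwards [Ioo_mem_nhdsGT_of_mem (Set.left_mem_Ico.2 one_pos)] with t ht
      have ht0 : (0 : ℝ) < t := ht.1
      have hmem : xhat + t • d ∈ X := by
        have heq : xhat + t • d = (1 - t) • xhat + t • y := by
          simp [hd, smul_sub, sub_smul]; abel
        rw [heq]
        exact hXconvex hxhatX hy (by linarith [ht.2]) ht0.le (by ring)
      have hmin := hxhat_min _ hmem
      rw [← add_div]
      apply div_nonneg _ ht0.le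
      linarith
    rwa [hFt_consistent] at hge
  · intro h
    refine (hxhat_uniq x hx ?_).symm
    intro w hw
    have h1 : (inner ℝ (gFt x) (w - x) : ℝ) ≤ Ft w - Ft x :=
      limit_quot_le_of_convexOn Ft hFtconv x w hx hw _
        (dirDeriv_of_hasGradientAt Ft (gFt x) x (w - x) (hFt_diff x))
    have h2 : dG x (w - x) ≤ G w - G x :=
      limit_quot_le_of_convexOn G hG x w trivial trivial _ (hdG x (w - x))
    have h3 := h w hw
    rw [hFt_consistent] at h1
    linarith
end
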